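/- Let Q be a partially ordered set equipped with a superlinear family of translations T, and let C be a category. For Q-modules M, N : Q → C, let d_weak(M,N) ∈ [0,∞] be the infimum of all ε admitting a weak ε-interleaving, and let d_standard(M,N) ∈ [0,∞] be the infimum of all ε admitting a standard ε-interleaving, i.e. a pair φ : M ⟶ (N)^ε, ψ : N ⟶ (M)^ε with (ψ)^ε ∘ φ = η^ε_{(M)^ε} ∘ η^ε_M : M ⟶ ((M)^ε)^ε and (φ)^ε ∘ ψ = η^ε_{(N)^ε} ∘ η^ε_N : N ⟶ ((N)^ε)^ε. Then d_weak(M,N) ≤ d_standard(M,N) ≤ 2·d_weak(M,N). -/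

import Mathlib

open CategoryTheory Limits NNReal ENNReal

universe v u

/-- A superlinear family of translations on a poset `Q`. -/
structure SuperlinearFamily (Q : Type v) [PartialOrder Q] where
  trans : ℝ≥0 → Q →o Q
  le_self : ∀ (ε : ℝ≥0) (q : Q), q ≤ trans ε q
  superlinear : ∀ (ε₁ ε₂ : ℝ≥0) (q : Q), trans ε₂ (trans ε₁ q) ≤ trans (ε₁ + ε₂) q

namespace SuperlinearFamily

variable {Q : Type v} [PartialOrder Q] (T : SuperlinearFamily Q)

lemma trans_mono_eps {ε ε' : ℝ≥0} (h : ε ≤ ε') (q : Q) : T.trans ε q ≤ T.trans ε' q :=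
  calc T.trans ε q ≤ T.trans (ε' - ε) (T.trans ε q) := T.le_self _ _
    _ ≤ T.trans (ε + (ε' - ε)) q := T.superlinear _ _ _
    _ = T.trans ε' q := by rw [add_tsub_cancel_of_le h]

variable {C : Type u} [Category.{v} C]

/-- The `ε`-shift `(M)^ε = M ∘ T_ε` of a `Q`-module. -/
def shift (ε : ℝ≥0) (M : Q ⥤ C) : Q ⥤ C := (T.trans ε).monotone.functor ⋙ M

/-- η^ε : M ⟶ (M)^ε. -/
def eta (ε : ℝ≥0) (M : Q ⥤ C) : M ⟶ T.shift ε M where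
  app q := M.map (homOfLE (T.le_self ε q))
  naturality a b u := by
    dsimp [shift, Monotone.functor]
    rw [← M.map_comp, ← M.map_comp]
    exact congrArg M.map (Subsingleton.elim _ _)

/-- η^{ε,ε'} : (M)^ε ⟶ (M)^{ε'} for ε ≤ ε'. -/
def etaLE {ε ε' : ℝ≥0} (h : ε ≤ ε') (M : Q ⥤ C) : T.shift ε M ⟶ T.shift ε' M where
  app q := M.map (homOfLE (T.trans_mono_eps h q))
  naturality a b u := by
    dsimp [shift, Monotone.functor]
    rw [← M.map_comp, ← M.map_comp]
    exact congrArg M.map (Subsingleton.elim _ _)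

/-- Σ^{ε,ε} : ((M)^ε)^ε ⟶ (M)^{2ε}. -/
def sigma (ε : ℝ≥0) (M : Q ⥤ C) : T.shift ε (T.shift ε M) ⟶ T.shift (2 * ε) M where
  app q := M.map (homOfLE (show T.trans ε (T.trans ε q) ≤ T.trans (2 * ε) q by
    rw [two_mul]; exact T.superlinear ε ε q))
  naturality a b u := by
    dsimp [shift, Monotone.functor]
    rw [← M.map_comp, ← M.map_comp]
    exact congrArg M.map (Subsingleton.elim _ _)

/-- The shift of a natural transformation: (ψ)^ε := T_ε^* ψ. -/
def shiftHom (ε : ℝ≥0) {M N : Q ⥤ C} (ψ : M ⟶ N) : T.shift ε M ⟶ T.shift ε N :=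
  Functor.whiskerLeft (T.trans ε).monotone.functor ψ

/-- A weak ε-interleaving of `Q`-modules `M` and `N`. -/
def WeakInterleaving (ε : ℝ≥0) (M N : Q ⥤ C) : Prop :=
  ∃ (φ : M ⟶ T.shift ε N) (ψ : N ⟶ T.shift ε M),
    φ ≫ T.shiftHom ε ψ ≫ T.sigma ε M = T.eta 0 M ≫ T.etaLE zero_le M ∧
    ψ ≫ T.shiftHom ε φ ≫ T.sigma ε N = T.eta 0 N ≫ T.etaLE zero_le N

/-- The weak interleaving distance between two `Q`-modules, valued in `[0,∞]`. -/
noncomputable def weakDist (M N : Q ⥤ C) : ℝ≥0∞ :=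
  ⨅ ε : {ε : ℝ≥0 // T.WeakInterleaving ε M N}, (ε : ℝ≥0∞)

end SuperlinearFamily

namespace SuperlinearFamily

variable {Q : Type v} [PartialOrder Q] {C : Type u} [Category.{v} C]
variable (T : SuperlinearFamily Q)

/-- A standard ε-interleaving of `Q`-modules: φ : M ⟶ (N)^ε and ψ : N ⟶ (M)^ε with
`(ψ)^ε ∘ φ = η^ε_{(M)^ε} ∘ η^ε_M` and `(φ)^ε ∘ ψ = η^ε_{(N)^ε} ∘ η^ε_N`. -/
def StdInterleaving (ε : ℝ≥0) (M N : Q ⥤ C) : Prop :=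
  ∃ (φ : M ⟶ T.shift ε N) (ψ : N ⟶ T.shift ε M),
    φ ≫ T.shiftHom ε ψ = T.eta ε M ≫ T.eta ε (T.shift ε M) ∧
    ψ ≫ T.shiftHom ε φ = T.eta ε N ≫ T.eta ε (T.shift ε N)

/-- The standard interleaving distance between two `Q`-modules, valued in `[0,∞]`. -/
noncomputable def stdDist (M N : Q ⥤ C) : ℝ≥0∞ :=
  ⨅ ε : {ε : ℝ≥0 // T.StdInterleaving ε M N}, (ε : ℝ≥0∞)

end SuperlinearFamily


namespace SuperlinearFamily

variable {Q : Type v} [PartialOrder Q] {C : Type u} [Category.{v} C]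
variable (T : SuperlinearFamily Q)

lemma map_eq_map (M : Q ⥤ C) {a b : Q} (f g : a ⟶ b) : M.map f = M.map g := by
  exact congrArg M.map (Subsingleton.elim _ _)

lemma map_comp_eq (M : Q ⥤ C) {a b b' c : Q} (f : a ⟶ b) (g : b ⟶ c)
    (f' : a ⟶ b') (g' : b' ⟶ c) : M.map f ≫ M.map g = M.map f' ≫ M.map g' := by
  rw [← M.map_comp, ← M.map_comp]; exact congrArg M.map (Subsingleton.elim _ _)

lemma std_eq_to_weak_eq {ε : ℝ≥0} {M N : Q ⥤ C}
    (φ : M ⟶ T.shift ε N) (ψ : N ⟶ T.shift ε M)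
    (h : φ ≫ T.shiftHom ε ψ = T.eta ε M ≫ T.eta ε (T.shift ε M)) :
    φ ≫ T.shiftHom ε ψ ≫ T.sigma ε M = T.eta 0 M ≫ T.etaLE zero_le M := by
  rw [← Category.assoc, h, Category.assoc]
  ext q
  simp only [NatTrans.comp_app, eta, etaLE, sigma, shift, shiftHom, Monotone.functor,
    Functor.comp_map]
  simp only [← M.map_comp]; exact map_eq_map M _ _

lemma std_to_weak {ε : ℝ≥0} {M N : Q ⥤ C} (h : T.StdInterleaving ε M N) :
    T.WeakInterleaving ε M N := by
  obtain ⟨φ, ψ, h1, h2⟩ := h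
  exact ⟨φ, ψ, T.std_eq_to_weak_eq φ ψ h1, T.std_eq_to_weak_eq ψ φ h2⟩

lemma weak_eq_to_std_eq {ε : ℝ≥0} {M N : Q ⥤ C}
    (φ : M ⟶ T.shift ε N) (ψ : N ⟶ T.shift ε M)
    (h : φ ≫ T.shiftHom ε ψ ≫ T.sigma ε M = T.eta 0 M ≫ T.etaLE zero_le M)
    (hle : ε ≤ 2 * ε) :
    (φ ≫ T.etaLE hle N) ≫ T.shiftHom (2 * ε) (ψ ≫ T.etaLE hle M) =
      T.eta (2 * ε) M ≫ T.eta (2 * ε) (T.shift (2 * ε) M) := by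
  have hq := fun q => congrArg (fun α => NatTrans.app α q) h
  ext q
  simp only [NatTrans.comp_app, Category.assoc] at hq ⊢
  simp only [shiftHom, Functor.whiskerLeft_app, NatTrans.comp_app, Category.assoc] at hq ⊢
  simp only [NatTrans.comp_app, eta, etaLE, sigma, shift, shiftHom, Monotone.functor,
    Functor.comp_map, Functor.whiskerLeft_app, Category.assoc] at hq ⊢
  -- naturality of ψ along T_ε q ⟶ T_{2ε} q
  have hnat := ψ.naturality (homOfLE (T.trans_mono_eps hle q))
  simp only [shift, Monotone.functor, Functor.comp_map] at hnat
  rw [← Category.assoc (N.map _), hnat]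
  simp only [Category.assoc]
  rw [← M.map_comp,
    show (M.map (homOfLE ((T.trans ε).monotone (T.trans_mono_eps hle q)) ≫
        homOfLE (T.trans_mono_eps hle ((T.trans (2 * ε)) q))) : _) =
      M.map (homOfLE (show T.trans ε (T.trans ε q) ≤ T.trans (2 * ε) q by
          rw [two_mul]; exact T.superlinear ε ε q)) ≫
      M.map (homOfLE (T.le_self (2 * ε) (T.trans (2 * ε) q))) from
    by rw [← M.map_comp]; exact map_eq_map M _ _]
  rw [← Category.assoc, ← Category.assoc]
  erw [Category.assoc (φ.app q), hq q]
  simp only [← M.map_comp]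
  exact map_eq_map M _ _

lemma weak_to_std {ε : ℝ≥0} {M N : Q ⥤ C} (h : T.WeakInterleaving ε M N) :
    T.StdInterleaving (2 * ε) M N := by
  obtain ⟨φ, ψ, h1, h2⟩ := h
  have hle : ε ≤ 2 * ε := by rw [two_mul]; exact le_add_self
  exact ⟨φ ≫ T.etaLE hle N, ψ ≫ T.etaLE hle M,
    T.weak_eq_to_std_eq φ ψ h1 hle, T.weak_eq_to_std_eq ψ φ h2 hle⟩

end SuperlinearFamily

/-- `d_weak(M,N) ≤ d_standard(M,N) ≤ 2·d_weak(M,N)` for modules over a poset equipped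
with a superlinear family of translations. -/
theorem weakDist_le_stdDist_le_two_mul_weakDist {Q : Type v} [PartialOrder Q]
    {C : Type u} [Category.{v} C] (T : SuperlinearFamily Q) (M N : Q ⥤ C) :
    T.weakDist M N ≤ T.stdDist M N ∧ T.stdDist M N ≤ 2 * T.weakDist M N := by
  constructor
  · refine le_iInf fun ⟨ε, hε⟩ => ?_
    exact iInf_le_of_le ⟨ε, T.std_to_weak hε⟩ le_rfl
  · rw [SuperlinearFamily.weakDist, ENNReal.mul_iInf_of_ne (by norm_num) (by norm_num)]
    refine le_iInf fun ⟨ε, hε⟩ => ?_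
    refine iInf_le_of_le ⟨2 * ε, T.weak_to_std hε⟩ ?_
    push_cast
    ring_nf
    exact le_rfl
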